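/- Let $\epsilon > 0$ and let $0 < \delta < \epsilon/3$. Let $G$ be a finite simple graph on $n$ vertices with the property that every vertex set $T$ with $|T| \le \delta n$ spans at most $(1+\epsilon/3)|T|$ edges (i.e., the induced subgraph $G[T]$ has at most $(1+\epsilon/3)|T|$ edges). Then $\nu(G, \mathcal{C}_{\lfloor \delta n \rfloor}) \le \nu(G, \mathcal{C}_{\lceil 3/\epsilon \rceil}) + \epsilon$; that is, $N(G, \mathcal{C}_{\lfloor \delta n\rfloor}) \le N(G, \mathcal{C}_{\lceil 3/\epsilon \rceil}) + \epsilon n$. -/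

import Mathlib

open SimpleGraph
open scoped Classical
set_option linter.unusedSectionVars false
set_option maxHeartbeats 1000000
namespace Frag



variable {V : Type*} [Fintype V] (G : SimpleGraph V)

/-- Reachability within a vertex set `A`. -/
def RIn (A : Set V) (u v : V) : Prop := ∃ w : G.Walk u v, ∀ x ∈ w.support, x ∈ A

/-- Connected component of `v` within `A`. -/
def cc (A : Set V) (v : V) : Set V := {w | RIn G A v w}

/-- Edges within `A`. -/
def EIn (A : Set V) : Set (Sym2 V) := {e | e ∈ G.edgeSet ∧ ∀ x ∈ e, x ∈ A}

def Conn (A : Set V) : Prop := ∀ ⦃x⦄, x ∈ A → ∀ ⦃y⦄, y ∈ A → RIn G A x y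

open Classical in
/-- The set of connected components of `A`, as a finset of sets. -/
noncomputable def compsF (A : Set V) : Finset (Set V) :=
  (A.toFinite.toFinset).image (cc G A)

/-- Neighbours of `u` within `A`. -/
def NbrIn (A : Set V) (u : V) : Set V := {w | w ∈ A ∧ G.Adj u w}

variable {G}
variable {A B C : Set V} {u v w : V}

lemma RIn.refl (hv : v ∈ A) : RIn G A v v := ⟨Walk.nil, by simp [hv]⟩

lemma RIn.symm (h : RIn G A u v) : RIn G A v u := by
  obtain ⟨p, hp⟩ := h
  exact ⟨p.reverse, by simpa using hp⟩

lemma RIn.trans (h : RIn G A u v) (h' : RIn G A v w) : RIn G A u w := by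
  obtain ⟨p, hp⟩ := h; obtain ⟨q, hq⟩ := h'
  refine ⟨p.append q, fun x hx => ?_⟩
  rcases (Walk.mem_support_append_iff _ _).1 hx with h | h
  · exact hp x h
  · exact hq x h

lemma RIn.mono (hAB : A ⊆ B) (h : RIn G A u v) : RIn G B u v := by
  obtain ⟨p, hp⟩ := h; exact ⟨p, fun x hx => hAB (hp x hx)⟩

lemma RIn.left_mem (h : RIn G A u v) : u ∈ A := by
  obtain ⟨p, hp⟩ := h; exact hp u p.start_mem_support

lemma RIn.right_mem (h : RIn G A u v) : v ∈ A := by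
  obtain ⟨p, hp⟩ := h; exact hp v p.end_mem_support

lemma RIn.of_adj (hu : u ∈ A) (hv : v ∈ A) (h : G.Adj u v) : RIn G A u v := by
  refine ⟨Walk.cons h Walk.nil, ?_⟩
  intro x hx
  simp only [Walk.support_cons, Walk.support_nil, List.mem_cons, List.mem_singleton] at hx
  rcases hx with rfl | hx | hx
  · exact hu
  · rcases hx with rfl; exact hv
  · simp at hx

lemma mem_cc_self (hv : v ∈ A) : v ∈ cc G A v := RIn.refl hv

lemma cc_subset : cc G A v ⊆ A := fun _ h => h.right_mem

lemma cc_eq_of_mem (h : w ∈ cc G A v) : cc G A w = cc G A v := by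
  ext x
  exact ⟨fun hx => (RIn.trans h hx), fun hx => (RIn.symm h).trans hx⟩

lemma mem_cc_comm (h : w ∈ cc G A v) : v ∈ cc G A w := RIn.symm h

/-- Walk supports stay within the component of the start. -/
lemma support_subset_cc {x y : V} (p : G.Walk x y) (hp : ∀ z ∈ p.support, z ∈ A) :
    ∀ z ∈ p.support, z ∈ cc G A x := by
  classical
  intro z hz
  exact ⟨p.takeUntil z hz, fun t ht => hp t (Walk.support_takeUntil_subset _ _ ht)⟩

lemma RIn.cc_localize (hv : v ∈ A) (hx : x' ∈ cc G A v) (h : RIn G A x' y') :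
    RIn G (cc G A v) x' y' := by
  obtain ⟨p, hp⟩ := h
  refine ⟨p, fun z hz => ?_⟩
  have := support_subset_cc p hp z hz
  rwa [cc_eq_of_mem hx] at this

lemma conn_cc (hv : v ∈ A) : Conn G (cc G A v) := by
  intro x hx y hy
  exact RIn.cc_localize hv hx ((RIn.symm hx).trans hy)

lemma mem_compsF {P : Set V} : P ∈ compsF G A ↔ ∃ v ∈ A, cc G A v = P := by
  classical
  simp only [compsF, Finset.mem_image, Set.Finite.mem_toFinset]

lemma cc_mem_compsF (hv : v ∈ A) : cc G A v ∈ compsF G A :=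
  mem_compsF.2 ⟨v, hv, rfl⟩

lemma compsF_eq_cc {P : Set V} (hP : P ∈ compsF G A) (hx : x' ∈ P) : P = cc G A x' := by
  obtain ⟨v, hv, rfl⟩ := mem_compsF.1 hP
  exact (cc_eq_of_mem hx).symm

lemma compsF_nonempty {P : Set V} (hP : P ∈ compsF G A) : P.Nonempty := by
  obtain ⟨v, hv, rfl⟩ := mem_compsF.1 hP
  exact ⟨v, mem_cc_self hv⟩

lemma compsF_subset {P : Set V} (hP : P ∈ compsF G A) : P ⊆ A := by
  obtain ⟨v, hv, rfl⟩ := mem_compsF.1 hP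
  exact cc_subset

lemma compsF_disjoint {P Q : Set V} (hP : P ∈ compsF G A) (hQ : Q ∈ compsF G A)
    (hne : P ≠ Q) : Disjoint P Q := by
  rw [Set.disjoint_left]
  intro x hxP hxQ
  exact hne ((compsF_eq_cc hP hxP).trans (compsF_eq_cc hQ hxQ).symm)

variable {V : Type*} [Fintype V] {G : SimpleGraph V} {A B C : Set V} {u v w : V}

lemma sum_ncard_compsF (A : Set V) : ∑ P ∈ compsF G A, P.ncard = A.ncard := by
  classical
  have hbU : A.toFinite.toFinset = (compsF G A).biUnion (fun P => P.toFinite.toFinset) := by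
    ext a
    simp only [Set.Finite.mem_toFinset, Finset.mem_biUnion]
    constructor
    · intro ha
      exact ⟨cc G A a, cc_mem_compsF ha, by simp [Set.Finite.mem_toFinset, mem_cc_self ha]⟩
    · rintro ⟨P, hP, haP⟩
      exact compsF_subset hP (by simpa [Set.Finite.mem_toFinset] using haP)
  have hd : ∀ P ∈ compsF G A, ∀ Q ∈ compsF G A, P ≠ Q →
      Disjoint (P.toFinite.toFinset) (Q.toFinite.toFinset) := by
    intro P hP Q hQ hne
    rw [Set.Finite.disjoint_toFinset]
    exact compsF_disjoint hP hQ hne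
  have := Finset.card_biUnion hd
  rw [← hbU] at this
  rw [Set.ncard_eq_toFinset_card A, this]
  exact Finset.sum_congr rfl (fun P _ => Set.ncard_eq_toFinset_card P)

lemma EIn_mono (hAB : A ⊆ B) : EIn G A ⊆ EIn G B := by
  rintro e ⟨he, hends⟩
  exact ⟨he, fun x hx => hAB (hends x hx)⟩

lemma mem_EIn_iff_comp {e : Sym2 V} : e ∈ EIn G A ↔ ∃ P ∈ compsF G A, e ∈ EIn G P := by
  constructor
  · intro he
    induction e using Sym2.ind with
    | _ x y =>
      obtain ⟨hadj, hends⟩ := he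
      rw [SimpleGraph.mem_edgeSet] at hadj
      have hx : x ∈ A := hends x (by simp)
      have hy : y ∈ A := hends y (by simp)
      refine ⟨cc G A x, cc_mem_compsF hx, by rwa [SimpleGraph.mem_edgeSet], fun z hz => ?_⟩
      rw [Sym2.mem_iff] at hz
      rcases hz with rfl | rfl
      · exact mem_cc_self hx
      · exact RIn.of_adj hx hy hadj
  · rintro ⟨P, hP, he⟩
    exact EIn_mono (compsF_subset hP) he

lemma sum_ncard_EIn_compsF (A : Set V) :
    ∑ P ∈ compsF G A, (EIn G P).ncard = (EIn G A).ncard := by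
  classical
  have hbU : (EIn G A).toFinite.toFinset =
      (compsF G A).biUnion (fun P => (EIn G P).toFinite.toFinset) := by
    ext e
    simp only [Set.Finite.mem_toFinset, Finset.mem_biUnion]
    rw [mem_EIn_iff_comp]
  have hd : ∀ P ∈ compsF G A, ∀ Q ∈ compsF G A, P ≠ Q →
      Disjoint ((EIn G P).toFinite.toFinset) ((EIn G Q).toFinite.toFinset) := by
    intro P hP Q hQ hne
    rw [Set.Finite.disjoint_toFinset, Set.disjoint_left]
    intro e heP heQ
    induction e using Sym2.ind with
    | _ x y =>
      have hxP : x ∈ P := heP.2 x (by simp)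
      have hxQ : x ∈ Q := heQ.2 x (by simp)
      exact (Set.disjoint_left.1 (compsF_disjoint hP hQ hne)) hxP hxQ
  have := Finset.card_biUnion hd
  rw [← hbU] at this
  rw [Set.ncard_eq_toFinset_card (EIn G A), this]
  exact Finset.sum_congr rfl (fun P _ => Set.ncard_eq_toFinset_card _)

lemma EIn_diff_singleton : EIn G (A \ {u}) = {e ∈ EIn G A | u ∉ e} := by
  ext e
  constructor
  · rintro ⟨he, hends⟩
    refine ⟨⟨he, fun x hx => (hends x hx).1⟩, fun hue => (hends u hue).2 rfl⟩
  · rintro ⟨⟨he, hends⟩, hue⟩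
    exact ⟨he, fun x hx => ⟨hends x hx, fun hxu => hue (hxu ▸ hx)⟩⟩

lemma ncard_EIn_diff_singleton (hu : u ∈ A) :
    (EIn G A).ncard = (EIn G (A \ {u})).ncard + (NbrIn G A u).ncard := by
  classical
  have hsplit : EIn G A = EIn G (A \ {u}) ∪ {e ∈ EIn G A | u ∈ e} := by
    rw [EIn_diff_singleton]
    ext e
    by_cases hue : u ∈ e <;> simp [hue]
  have hdisj : Disjoint (EIn G (A \ {u})) {e ∈ EIn G A | u ∈ e} := by
    rw [Set.disjoint_left, EIn_diff_singleton]
    rintro e ⟨_, hnot⟩ ⟨_, hin⟩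
    exact hnot hin
  have himg : {e ∈ EIn G A | u ∈ e} = (fun w => s(u, w)) '' (NbrIn G A u) := by
    ext e
    constructor
    · rintro ⟨⟨he, hends⟩, hue⟩
      induction e using Sym2.ind with
      | _ x y =>
        rw [SimpleGraph.mem_edgeSet] at he
        rw [Sym2.mem_iff] at hue
        rcases hue with rfl | rfl
        · exact ⟨y, ⟨hends y (by simp), he⟩, rfl⟩
        · exact ⟨x, ⟨hends x (by simp), he.symm⟩, Sym2.eq_swap⟩
    · rintro ⟨z, ⟨hzA, hadj⟩, rfl⟩
      refine ⟨⟨by rwa [SimpleGraph.mem_edgeSet], fun x hx => ?_⟩, by simp⟩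
      rw [Sym2.mem_iff] at hx
      rcases hx with rfl | rfl
      · exact hu
      · exact hzA
  have hinj : Set.InjOn (fun w => s(u, w)) (NbrIn G A u) := by
    rintro a ⟨_, ha⟩ b ⟨_, hb⟩ hab
    simp only [Sym2.eq_iff] at hab
    rcases hab with ⟨-, h⟩ | ⟨hub, hau⟩
    · exact h
    · exact absurd (hau ▸ ha) (G.irrefl)
  rw [hsplit, Set.ncard_union_eq hdisj, himg, Set.ncard_image_of_injOn hinj]

lemma ncard_biUnion_le (F : Finset (Set V)) (f : Set V → Set V) :
    (⋃ P ∈ F, f P).ncard ≤ ∑ P ∈ F, (f P).ncard := by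
  classical
  induction F using Finset.induction_on with
  | empty => simp
  | insert _ _ hnotmem ih =>
    rename_i P F'
    rw [Finset.set_biUnion_insert, Finset.sum_insert hnotmem]
    exact le_trans (Set.ncard_union_le _ _) (by omega)

variable {V : Type*} [Fintype V] {G : SimpleGraph V} {A B C : Set V} {u v w : V}

lemma nbr_aux {C : Set V} : ∀ {y u : V} (w : G.Walk y u),
    (∀ x ∈ w.support, x ∈ C) → y ≠ u → ∃ z, G.Adj u z ∧ RIn G (C \ {u}) y z := by
  intro y u w
  induction w with
  | nil => intro _ h; exact absurd rfl h
  | @cons a a₁ b h rest ih =>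
    intro hsupp hyne
    have haC : a ∈ C := hsupp a (Walk.start_mem_support _)
    have ha1C : a₁ ∈ C := hsupp a₁ (by simp [Walk.support_cons])
    by_cases h1 : a₁ = b
    · refine ⟨a, ?_, RIn.refl (show a ∈ C \ {b} from ⟨haC, hyne⟩)⟩
      exact (h1 ▸ h).symm
    · obtain ⟨z, hz, hr⟩ := ih (fun x hx => hsupp x (by simp [Walk.support_cons, hx])) h1
      exact ⟨z, hz, (RIn.of_adj (show a ∈ C \ {b} from ⟨haC, hyne⟩)
        (show a₁ ∈ C \ {b} from ⟨ha1C, h1⟩) h).trans hr⟩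

/-- Every component of `C \ {u}` contains a neighbour of `u`. -/
lemma piece_has_nbr (hC : Conn G C) (hu : u ∈ C) {P : Set V}
    (hP : P ∈ compsF G (C \ {u})) : ∃ z ∈ P, G.Adj u z := by
  obtain ⟨y, hy, rfl⟩ := mem_compsF.1 hP
  obtain ⟨wk, hwk⟩ := hC hy.1 hu
  obtain ⟨z, hz, hr⟩ := nbr_aux wk hwk hy.2
  exact ⟨z, hr, hz⟩

lemma compsF_diff_eq_image (hC : Conn G C) (hu : u ∈ C) :
    compsF G (C \ {u}) =
      ((NbrIn G C u).toFinite.toFinset).image (fun w => cc G (C \ {u}) w) := by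
  classical
  ext P
  simp only [Finset.mem_image, Set.Finite.mem_toFinset]
  constructor
  · intro hP
    obtain ⟨z, hzP, hz⟩ := piece_has_nbr hC hu hP
    exact ⟨z, ⟨(compsF_subset hP hzP).1, hz⟩, (compsF_eq_cc hP hzP).symm⟩
  · rintro ⟨z, ⟨hzC, hz⟩, rfl⟩
    exact cc_mem_compsF ⟨hzC, hz.ne'⟩

lemma card_compsF_diff_le (hC : Conn G C) (hu : u ∈ C) :
    (compsF G (C \ {u})).card ≤ (NbrIn G C u).ncard := by
  classical
  rw [compsF_diff_eq_image hC hu, Set.ncard_eq_toFinset_card (NbrIn G C u)]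
  exact Finset.card_image_le

lemma card_compsF_diff_lt (hC : Conn G C) (hu : u ∈ C) {x y : V}
    (hx : x ∈ NbrIn G C u) (hy : y ∈ NbrIn G C u) (hxy : x ≠ y)
    (hr : RIn G (C \ {u}) x y) :
    (compsF G (C \ {u})).card + 1 ≤ (NbrIn G C u).ncard := by
  classical
  have himg : ((NbrIn G C u).toFinite.toFinset).image (fun w => cc G (C \ {u}) w) =
      (((NbrIn G C u).toFinite.toFinset).erase y).image (fun w => cc G (C \ {u}) w) := by
    apply Finset.Subset.antisymm
    · intro P hP
      rw [Finset.mem_image] at hP ⊢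
      obtain ⟨z, hz, rfl⟩ := hP
      by_cases hzy : z = y
      · subst hzy
        refine ⟨x, Finset.mem_erase.2 ⟨hxy, (Set.Finite.mem_toFinset _).2 hx⟩, ?_⟩
        exact cc_eq_of_mem hr.symm
      · exact ⟨z, Finset.mem_erase.2 ⟨hzy, hz⟩, rfl⟩
    · exact Finset.image_subset_image (Finset.erase_subset _ _)
  have hyF : y ∈ (NbrIn G C u).toFinite.toFinset := (Set.Finite.mem_toFinset _).2 hy
  have h1 : (compsF G (C \ {u})).card ≤ ((NbrIn G C u).toFinite.toFinset).card - 1 := by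
    rw [compsF_diff_eq_image hC hu, himg]
    calc _ ≤ (((NbrIn G C u).toFinite.toFinset).erase y).card := Finset.card_image_le
    _ = _ := Finset.card_erase_of_mem hyF
  have h2 : 1 ≤ ((NbrIn G C u).toFinite.toFinset).card := Finset.card_pos.2 ⟨y, hyF⟩
  rw [Set.ncard_eq_toFinset_card (NbrIn G C u)]
  omega

lemma piece_ncard_lt (hu : u ∈ C) {P : Set V} (hP : P ∈ compsF G (C \ {u})) :
    P.ncard < C.ncard := by
  apply Set.ncard_lt_ncard _ C.toFinite
  constructor
  · exact (compsF_subset hP).trans Set.diff_subset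
  · intro hsub
    exact (compsF_subset hP (hsub hu)).2 rfl

lemma conn_of_compsF {P : Set V} (hP : P ∈ compsF G A) : Conn G P := by
  obtain ⟨z, hz, rfl⟩ := mem_compsF.1 hP
  exact conn_cc hz

/-- Connectivity: `|C| ≤ |E(C)| + 1` for connected nonempty `C`. -/
lemma ncard_le_EIn_succ : ∀ n (C : Set V), C.ncard = n → Conn G C → C.Nonempty →
    C.ncard ≤ (EIn G C).ncard + 1 := by
  intro n
  induction n using Nat.strong_induction_on with
  | _ n ih =>
    intro C hn hC hne
    obtain ⟨u, hu⟩ := hne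
    have key : ∀ P ∈ compsF G (C \ {u}), P.ncard ≤ (EIn G P).ncard + 1 := by
      intro P hP
      exact ih P.ncard (hn ▸ piece_ncard_lt hu hP) P rfl (conn_of_compsF hP)
        (compsF_nonempty hP)
    have hsumV : ∑ P ∈ compsF G (C \ {u}), P.ncard = (C \ {u}).ncard :=
      sum_ncard_compsF _
    have hsumE : ∑ P ∈ compsF G (C \ {u}), (EIn G P).ncard = (EIn G (C \ {u})).ncard :=
      sum_ncard_EIn_compsF _
    have hE := ncard_EIn_diff_singleton (G := G) hu
    have hj := card_compsF_diff_le hC hu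
    have hCd : (C \ {u}).ncard = C.ncard - 1 := Set.ncard_diff_singleton_of_mem hu
    have hpos : 0 < C.ncard := (Set.ncard_pos C.toFinite).2 ⟨u, hu⟩
    have hstep : ∑ P ∈ compsF G (C \ {u}), P.ncard ≤
        (∑ P ∈ compsF G (C \ {u}), (EIn G P).ncard) + (compsF G (C \ {u})).card := by
      calc ∑ P ∈ compsF G (C \ {u}), P.ncard
          ≤ ∑ P ∈ compsF G (C \ {u}), ((EIn G P).ncard + 1) := Finset.sum_le_sum key
        _ = _ := by rw [Finset.sum_add_distrib, Finset.sum_const, smul_eq_mul, mul_one]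
    omega

/-- Acyclicity, phrased via two neighbours not being joined avoiding the centre. -/
def NoCyc (G : SimpleGraph V) (A : Set V) : Prop :=
  ∀ x x₁ x₂ : V, x ∈ A → G.Adj x x₁ → G.Adj x x₂ → x₁ ≠ x₂ → ¬ RIn G (A \ {x}) x₁ x₂

lemma NoCyc.mono (hBA : B ⊆ A) (h : NoCyc G A) : NoCyc G B := by
  intro x x₁ x₂ hx h1 h2 hne hr
  exact h _ _ _ (hBA hx) h1 h2 hne (hr.mono (Set.diff_subset_diff_left hBA))

/-- In an acyclic set, `|E(C)| + 1 ≤ |C|`. -/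
lemma EIn_succ_le_ncard : ∀ n (C : Set V), C.ncard = n → Conn G C → C.Nonempty →
    NoCyc G C → (EIn G C).ncard + 1 ≤ C.ncard := by
  intro n
  induction n using Nat.strong_induction_on with
  | _ n ih =>
    intro C hn hC hne hnc
    obtain ⟨u, hu⟩ := hne
    have key : ∀ P ∈ compsF G (C \ {u}), (EIn G P).ncard + 1 ≤ P.ncard := by
      intro P hP
      exact ih P.ncard (hn ▸ piece_ncard_lt hu hP) P rfl (conn_of_compsF hP)
        (compsF_nonempty hP) (hnc.mono ((compsF_subset hP).trans Set.diff_subset))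
    have hsumV : ∑ P ∈ compsF G (C \ {u}), P.ncard = (C \ {u}).ncard :=
      sum_ncard_compsF _
    have hsumE : ∑ P ∈ compsF G (C \ {u}), (EIn G P).ncard = (EIn G (C \ {u})).ncard :=
      sum_ncard_EIn_compsF _
    have hE := ncard_EIn_diff_singleton (G := G) hu
    have hCd : (C \ {u}).ncard = C.ncard - 1 := Set.ncard_diff_singleton_of_mem hu
    have hpos : 0 < C.ncard := (Set.ncard_pos C.toFinite).2 ⟨u, hu⟩
    -- d ≤ j via injectivity
    have hdj : (NbrIn G C u).ncard ≤ (compsF G (C \ {u})).card := by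
      classical
      rw [Set.ncard_eq_toFinset_card (NbrIn G C u)]
      apply Finset.card_le_card_of_injOn (fun z => cc G (C \ {u}) z)
      · intro z hz
        rw [Finset.mem_coe, Set.Finite.mem_toFinset] at hz
        exact cc_mem_compsF ⟨hz.1, hz.2.ne'⟩
      · intro z hz z' hz' hcc
        rw [Set.Finite.coe_toFinset] at hz hz'
        by_contra hne'
        have hz'' : z' ∈ cc G (C \ {u}) z' := mem_cc_self ⟨hz'.1, hz'.2.ne'⟩
        have hcc' : cc G (C \ {u}) z = cc G (C \ {u}) z' := hcc
        rw [← hcc'] at hz''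
        exact hnc _ _ _ hu hz.2 hz'.2 hne' hz''
    have hstep : ∑ P ∈ compsF G (C \ {u}), ((EIn G P).ncard + 1) ≤
        ∑ P ∈ compsF G (C \ {u}), P.ncard := Finset.sum_le_sum key
    rw [Finset.sum_add_distrib, Finset.sum_const, smul_eq_mul, mul_one] at hstep
    omega

/-- Uniqueness of paths under `NoCyc`. -/
lemma path_unique (hnc : NoCyc G A) : ∀ {x y : V} (p q : G.Walk x y), p.IsPath → q.IsPath →
    (∀ z ∈ p.support, z ∈ A) → (∀ z ∈ q.support, z ∈ A) → p = q := by
  intro x y p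
  induction p with
  | nil =>
    intro q _ hq _ _
    exact ((Walk.isPath_iff_eq_nil (p := q)).1 hq).symm
  | @cons x x₁ y h p' ih =>
    intro q hp hq hps hqs
    rw [Walk.cons_isPath_iff] at hp
    cases q with
    | nil =>
      exact absurd (Walk.end_mem_support p') (by simpa using hp.2)
    | @cons _ x₂ _ h₂ q' =>
      rw [Walk.cons_isPath_iff] at hq
      by_cases hx12 : x₁ = x₂
      · subst hx12
        have := ih q' hp.1 hq.1
          (fun z hz => hps z (by simp [Walk.support_cons, hz]))
          (fun z hz => hqs z (by simp [Walk.support_cons, hz]))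
        rw [this]
      · exfalso
        have hxA : x ∈ A := hps x (Walk.start_mem_support _)
        apply hnc _ _ _ hxA h h₂ hx12
        refine ⟨p'.append q'.reverse, fun z hz => ?_⟩
        rw [Walk.mem_support_append_iff] at hz
        rcases hz with hz | hz
        · exact ⟨hps z (by simp [Walk.support_cons, hz]), fun hzx => hp.2 (hzx ▸ hz)⟩
        · rw [Walk.support_reverse, List.mem_reverse] at hz
          exact ⟨hqs z (by simp [Walk.support_cons, hz]), fun hzx => hq.2 (hzx ▸ hz)⟩

lemma no_cross {y : V} (hnc : NoCyc G C) (hadj : G.Adj u v) (h1 : RIn G (C \ {u}) v y)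
    (h2 : RIn G (C \ {v}) u y) : False := by
  obtain ⟨p₁, hp₁⟩ := h1
  obtain ⟨q₁, hq₁⟩ := h2
  set p := p₁.bypass with hp_def
  set q := q₁.bypass with hq_def
  have hps : ∀ z ∈ p.support, z ∈ C \ {u} := fun z hz => hp₁ z (p₁.support_bypass_subset hz)
  have hqs : ∀ z ∈ q.support, z ∈ C \ {v} := fun z hz => hq₁ z (q₁.support_bypass_subset hz)
  have hvq : v ∉ q.support := fun h => (hqs v h).2 rfl
  have w₂ : G.Walk v y := Walk.cons hadj.symm q
  have hw₂path : (Walk.cons hadj.symm q).IsPath := (Walk.cons_isPath_iff _ _).2 ⟨q₁.bypass_isPath, hvq⟩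
  have heq : p = Walk.cons hadj.symm q := by
    apply path_unique hnc p (Walk.cons hadj.symm q) p₁.bypass_isPath hw₂path
    · exact fun z hz => (hps z hz).1
    · intro z hz
      rw [Walk.support_cons, List.mem_cons] at hz
      rcases hz with rfl | hz
      · exact (hp₁ _ p₁.start_mem_support).1
      · exact (hqs z hz).1
  have hu_in : u ∈ p.support := by
    rw [heq, Walk.support_cons]
    exact List.mem_cons_of_mem _ (Walk.start_mem_support q)
  exact (hps u hu_in).2 rfl

/-- The chunk lemma: in a connected acyclic set of size `≥ b+1`, there is a vertex whose
removal leaves at most one component of size `> b`, and that component misses `≥ b+1`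
vertices of `C`. -/
lemma chunk (hC : Conn G C) (hnc : NoCyc G C) {b : ℕ} (hb : b + 1 ≤ C.ncard) :
    ∃ u ∈ C, ∃ R : Set V,
      (∀ P ∈ compsF G (C \ {u}), P ≠ R → P.ncard ≤ b) ∧
      R.ncard + (b + 1) ≤ C.ncard := by
  classical
  have hCne : C.Nonempty := by
    rw [← Set.ncard_pos C.toFinite]; omega
  set Fs : Set ℕ := {m | ∃ v ∈ C, ∃ K ∈ compsF G (C \ {v}), K.ncard = m ∧ b + 1 ≤ m} with hFs
  by_cases hFe : Fs.Nonempty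
  case neg =>
    obtain ⟨u, hu⟩ := hCne
    refine ⟨u, hu, ∅, fun P hP _ => ?_, by simpa using hb⟩
    by_contra hbig
    exact hFe ⟨P.ncard, u, hu, P, hP, rfl, by omega⟩
  case pos =>
    have hmem := Nat.sInf_mem hFe
    set m₀ := sInf Fs with hm₀
    obtain ⟨v, hv, K, hK, hKcard, hKbig⟩ := hmem
    obtain ⟨u, huK, hadj⟩ := piece_has_nbr hC hv hK
    have huC : u ∈ C := (compsF_subset hK huK).1
    have hune : u ≠ v := (compsF_subset hK huK).2
    have hKeq : K = cc G (C \ {v}) u := compsF_eq_cc hK huK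
    set R := cc G (C \ {u}) v with hR
    have hvCu : v ∈ C \ {u} := ⟨hv, fun h => hune (h.symm)⟩
    have hRK : Disjoint R K := by
      rw [Set.disjoint_left]
      intro y hyR hyK
      have h2 : RIn G (C \ {v}) u y := by rw [hKeq] at hyK; exact hyK
      exact no_cross hnc hadj.symm hyR h2
    refine ⟨u, huC, R, ?_, ?_⟩
    · intro P hP hPR
      by_contra hbig
      push_neg at hbig
      have hPF : P.ncard ∈ Fs := ⟨u, huC, P, hP, rfl, hbig⟩
      have hmin : m₀ ≤ P.ncard := Nat.sInf_le hPF
      -- show P ⊆ K \ {u}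
      have hvP : v ∉ P := by
        intro hvP
        exact hPR ((compsF_eq_cc hP hvP).trans rfl)
      obtain ⟨w', hwP, hadjw⟩ := piece_has_nbr hC huC hP
      have hwv : w' ≠ v := fun h => hvP (h ▸ hwP)
      have hwCu : w' ∈ C \ {u} := compsF_subset hP hwP
      have hwK : w' ∈ K := by
        rw [hKeq]
        exact RIn.of_adj ⟨huC, hune⟩ ⟨hwCu.1, hwv⟩ hadjw
      have hPsub : P ⊆ K \ {u} := by
        intro y hyP
        have hPw : P = cc G (C \ {u}) w' := compsF_eq_cc hP hwP
        have hry : RIn G (C \ {u}) w' y := by rw [hPw] at hyP; exact hyP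
        obtain ⟨wk, hwk⟩ := hry
        have hsupP : ∀ z ∈ wk.support, z ∈ P := by
          intro z hz
          rw [hPw]
          exact support_subset_cc wk hwk z hz
        have hry' : RIn G (C \ {v}) w' y := by
          refine ⟨wk, fun z hz => ⟨(hwk z hz).1, fun hzv => ?_⟩⟩
          exact hvP (hzv ▸ hsupP z hz)
        have : y ∈ cc G (C \ {v}) w' := hry'
        rw [cc_eq_of_mem (show w' ∈ cc G (C \ {v}) u from hKeq ▸ hwK)] at this
        exact ⟨hKeq ▸ this, (compsF_subset hP hyP).2⟩
      have hcard : P.ncard ≤ K.ncard - 1 := by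
        have h1 : P.ncard ≤ (K \ {u}).ncard := Set.ncard_le_ncard hPsub (K \ {u}).toFinite
        rwa [Set.ncard_diff_singleton_of_mem huK] at h1
      have hKpos : 1 ≤ K.ncard := by omega
      omega
    · have hsub : R ∪ K ⊆ C := Set.union_subset (cc_subset.trans Set.diff_subset)
        ((compsF_subset hK).trans Set.diff_subset)
      have := Set.ncard_le_ncard hsub C.toFinite
      rw [Set.ncard_union_eq hRK] at this
      omega
lemma combine {b : ℕ} (hu : u ∈ C) (f : Set V → Set V)
    (hfsub : ∀ P ∈ compsF G (C \ {u}), f P ⊆ P)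
    (hfcomp : ∀ P ∈ compsF G (C \ {u}), ∀ x ∈ P \ f P, (cc G (P \ f P) x).ncard ≤ b) :
    ∃ D ⊆ C, (∀ x ∈ C \ D, (cc G (C \ D) x).ncard ≤ b) ∧
      D.ncard ≤ 1 + ∑ P ∈ compsF G (C \ {u}), (f P).ncard := by
  classical
  refine ⟨{u} ∪ ⋃ P ∈ compsF G (C \ {u}), f P, ?_, ?_, ?_⟩
  · apply Set.union_subset (by simpa using hu)
    apply Set.iUnion₂_subset
    intro P hP
    exact (hfsub P hP).trans ((compsF_subset hP).trans Set.diff_subset)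
  · intro x hx
    have hxu : x ∉ ({u} : Set V) := fun h => hx.2 (Set.mem_union_left _ h)
    have hxCu : x ∈ C \ {u} := ⟨hx.1, hxu⟩
    have hPF : cc G (C \ {u}) x ∈ compsF G (C \ {u}) := cc_mem_compsF hxCu
    have hxP : x ∈ cc G (C \ {u}) x \ f (cc G (C \ {u}) x) := by
      refine ⟨mem_cc_self hxCu, fun hxf => hx.2 ?_⟩
      exact Set.mem_union_right _ (Set.mem_biUnion hPF hxf)
    have hsub2 : cc G (C \ ({u} ∪ ⋃ P ∈ compsF G (C \ {u}), f P)) x ⊆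
        cc G (cc G (C \ {u}) x \ f (cc G (C \ {u}) x)) x := by
      intro y hy
      obtain ⟨wk, hwk⟩ := hy
      have hsupCu : ∀ z ∈ wk.support, z ∈ C \ {u} := fun z hz =>
        ⟨(hwk z hz).1, fun h => (hwk z hz).2 (Set.mem_union_left _ h)⟩
      refine ⟨wk, fun z hz => ⟨support_subset_cc wk hsupCu z hz, fun hzf => ?_⟩⟩
      exact (hwk z hz).2 (Set.mem_union_right _ (Set.mem_biUnion hPF hzf))
    exact le_trans (Set.ncard_le_ncard hsub2 (Set.toFinite _)) (hfcomp _ hPF x hxP)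
  · calc ({u} ∪ ⋃ P ∈ compsF G (C \ {u}), f P).ncard
        ≤ ({u} : Set V).ncard + (⋃ P ∈ compsF G (C \ {u}), f P).ncard :=
          Set.ncard_union_le _ _
    _ ≤ 1 + ∑ P ∈ compsF G (C \ {u}), (f P).ncard := by
        rw [Set.ncard_singleton]
        exact Nat.add_le_add_left (ncard_biUnion_le _ _) 1

/-- The deletion budget for a connected set. -/
noncomputable def gBound (G : SimpleGraph V) (b : ℕ) (C : Set V) : ℤ :=
  if C.ncard ≤ b then 0
  else (C.ncard : ℤ) + ((b : ℤ) + 1) * ((EIn G C).ncard + 1 - C.ncard)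

/-- Main per-component deletion lemma. -/
lemma ML (b : ℕ) : ∀ n (C : Set V), C.ncard = n → Conn G C → C.Nonempty →
    ∃ D ⊆ C, (∀ x ∈ C \ D, (cc G (C \ D) x).ncard ≤ b) ∧
      ((b : ℤ) + 1) * D.ncard ≤ gBound G b C := by
  intro n
  induction n using Nat.strong_induction_on with
  | _ n ih =>
    intro C hn hC hne
    by_cases hsmall : C.ncard ≤ b
    · refine ⟨∅, Set.empty_subset C, ?_, ?_⟩
      · intro x hx
        rw [Set.diff_empty]
        exact le_trans (Set.ncard_le_ncard cc_subset C.toFinite) hsmall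
      · simp [gBound, hsmall]
    · -- C is big
      push_neg at hsmall
      have hgC : gBound G b C = (C.ncard : ℤ) + ((b : ℤ) + 1) * ((EIn G C).ncard + 1 - C.ncard) := by
        rw [gBound, if_neg (by omega)]
      have hCE : C.ncard ≤ (EIn G C).ncard + 1 := ncard_le_EIn_succ C.ncard C rfl hC hne
      -- common recursion machinery, parameterised by the removed vertex u
      have main : ∀ u ∈ C, ∃ D ⊆ C, (∀ x ∈ C \ D, (cc G (C \ D) x).ncard ≤ b) ∧
          ((b : ℤ) + 1) * D.ncard ≤ ((b : ℤ) + 1) +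
            ∑ P ∈ compsF G (C \ {u}), gBound G b P := by
        intro u hu
        have hrec : ∀ P ∈ compsF G (C \ {u}), ∃ DP, DP ⊆ P ∧
            (∀ x ∈ P \ DP, (cc G (P \ DP) x).ncard ≤ b) ∧
            ((b : ℤ) + 1) * DP.ncard ≤ gBound G b P := by
          intro P hP
          obtain ⟨DP, h1, h2, h3⟩ := ih P.ncard (hn ▸ piece_ncard_lt hu hP) P rfl
            (conn_of_compsF hP) (compsF_nonempty hP)
          exact ⟨DP, h1, h2, h3⟩
        choose! f hfsub hfcomp hfbound using hrec
        obtain ⟨D, hDsub, hDcomp, hDcard⟩ := combine (b := b) hu f hfsub hfcomp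
        refine ⟨D, hDsub, hDcomp, ?_⟩
        have hcast : (D.ncard : ℤ) ≤ 1 + ∑ P ∈ compsF G (C \ {u}), ((f P).ncard : ℤ) := by
          exact_mod_cast hDcard
        have hmul := mul_le_mul_of_nonneg_left hcast (by positivity : (0:ℤ) ≤ (b : ℤ) + 1)
        have hsumb : ∑ P ∈ compsF G (C \ {u}), ((b : ℤ) + 1) * ((f P).ncard : ℤ) ≤
            ∑ P ∈ compsF G (C \ {u}), gBound G b P := Finset.sum_le_sum hfbound
        rw [mul_add, mul_one, Finset.mul_sum] at hmul
        linarith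
      by_cases hnc : NoCyc G C
      · -- chunk case
        obtain ⟨u, hu, R, hsmallP, hRcard⟩ := chunk (b := b) hC hnc (by omega)
        obtain ⟨D, hDsub, hDcomp, hDbound⟩ := main u hu
        refine ⟨D, hDsub, hDcomp, ?_⟩
        have hsumg : ∑ P ∈ compsF G (C \ {u}), gBound G b P ≤ (R.ncard : ℤ) := by
          have hper : ∀ P ∈ compsF G (C \ {u}), gBound G b P ≤
              (if P = R then (R.ncard : ℤ) else 0) := by
            intro P hP
            by_cases hPR : P = R
            · subst hPR
              rw [if_pos rfl, gBound]
              split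
              · exact_mod_cast Nat.cast_nonneg P.ncard
              · have hE : (EIn G P).ncard + 1 ≤ P.ncard :=
                  EIn_succ_le_ncard P.ncard P rfl (conn_of_compsF hP) (compsF_nonempty hP)
                    (hnc.mono ((compsF_subset hP).trans Set.diff_subset))
                have h1 : ((EIn G P).ncard : ℤ) + 1 ≤ (P.ncard : ℤ) := by exact_mod_cast hE
                nlinarith [(by positivity : (0:ℤ) ≤ (b:ℤ)+1)]
            · rw [if_neg hPR, gBound, if_pos (hsmallP P hP hPR)]
          calc ∑ P ∈ compsF G (C \ {u}), gBound G b P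
              ≤ ∑ P ∈ compsF G (C \ {u}), (if P = R then (R.ncard : ℤ) else 0) :=
                Finset.sum_le_sum hper
          _ ≤ (R.ncard : ℤ) := by
              rw [Finset.sum_ite_eq' (compsF G (C \ {u})) R (fun _ => (R.ncard : ℤ))]
              split
              · exact le_refl _
              · exact_mod_cast Nat.cast_nonneg R.ncard
        have hRC : (R.ncard : ℤ) + ((b : ℤ) + 1) ≤ (C.ncard : ℤ) := by exact_mod_cast hRcard
        have hnn : (0:ℤ) ≤ ((b : ℤ) + 1) * ((EIn G C).ncard + 1 - C.ncard) := by
          apply mul_nonneg (by positivity)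
          have : (C.ncard : ℤ) ≤ (EIn G C).ncard + 1 := by exact_mod_cast hCE
          linarith
        rw [hgC]
        linarith
      · -- cycle case
        rw [NoCyc] at hnc
        push_neg at hnc
        obtain ⟨u, x₁, x₂, hu, hadj1, hadj2, h12, hr⟩ := hnc
        obtain ⟨D, hDsub, hDcomp, hDbound⟩ := main u hu
        refine ⟨D, hDsub, hDcomp, ?_⟩
        have hx1 : x₁ ∈ NbrIn G C u := ⟨(RIn.left_mem hr).1, hadj1⟩
        have hx2 : x₂ ∈ NbrIn G C u := ⟨(RIn.right_mem hr).1, hadj2⟩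
        have hj : (compsF G (C \ {u})).card + 1 ≤ (NbrIn G C u).ncard :=
          card_compsF_diff_lt hC hu hx1 hx2 h12 hr
        have hsumV : ∑ P ∈ compsF G (C \ {u}), P.ncard = (C \ {u}).ncard := sum_ncard_compsF _
        have hsumE : ∑ P ∈ compsF G (C \ {u}), (EIn G P).ncard = (EIn G (C \ {u})).ncard :=
          sum_ncard_EIn_compsF _
        have hEV := ncard_EIn_diff_singleton (G := G) hu
        have hCd : (C \ {u}).ncard = C.ncard - 1 := Set.ncard_diff_singleton_of_mem hu
        have hpos : 0 < C.ncard := by omega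
        -- per-piece bound in ℤ
        have hper : ∀ P ∈ compsF G (C \ {u}), gBound G b P ≤
            (1 - ((b : ℤ) + 1)) * P.ncard + ((b : ℤ) + 1) * (EIn G P).ncard + ((b : ℤ) + 1) := by
          intro P hP
          have hPe : P.ncard ≤ (EIn G P).ncard + 1 :=
            ncard_le_EIn_succ P.ncard P rfl (conn_of_compsF hP) (compsF_nonempty hP)
          have hPe' : (P.ncard : ℤ) ≤ (EIn G P).ncard + 1 := by exact_mod_cast hPe
          have hexp : (P.ncard : ℤ) + ((b : ℤ) + 1) * ((EIn G P).ncard + 1 - P.ncard) =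
              (1 - ((b : ℤ) + 1)) * P.ncard + ((b : ℤ) + 1) * (EIn G P).ncard + ((b : ℤ) + 1) := by
            ring
          rw [gBound]
          split
          · rw [← hexp]
            have h1 : (0:ℤ) ≤ ((b : ℤ) + 1) * ((EIn G P).ncard + 1 - P.ncard) :=
              mul_nonneg (by positivity) (by linarith)
            positivity
          · exact le_of_eq hexp
        have hsumg : ∑ P ∈ compsF G (C \ {u}), gBound G b P ≤
            (1 - ((b : ℤ) + 1)) * ((C.ncard : ℤ) - 1) +
              ((b : ℤ) + 1) * ((EIn G (C \ {u})).ncard : ℤ) +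
              ((b : ℤ) + 1) * ((compsF G (C \ {u})).card : ℤ) := by
          calc ∑ P ∈ compsF G (C \ {u}), gBound G b P
              ≤ ∑ P ∈ compsF G (C \ {u}),
                ((1 - ((b : ℤ) + 1)) * P.ncard + ((b : ℤ) + 1) * (EIn G P).ncard + ((b : ℤ) + 1)) :=
                Finset.sum_le_sum hper
          _ = (1 - ((b : ℤ) + 1)) * (∑ P ∈ compsF G (C \ {u}), (P.ncard : ℤ)) +
                ((b : ℤ) + 1) * (∑ P ∈ compsF G (C \ {u}), ((EIn G P).ncard : ℤ)) +
                ((b : ℤ) + 1) * ((compsF G (C \ {u})).card : ℤ) := by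
              rw [Finset.sum_add_distrib, Finset.sum_add_distrib, ← Finset.mul_sum,
                ← Finset.mul_sum, Finset.sum_const, nsmul_eq_mul]
              ring
          _ = _ := by
              have h1 : ∑ P ∈ compsF G (C \ {u}), (P.ncard : ℤ) = ((C.ncard : ℤ) - 1) := by
                rw [← Nat.cast_sum, hsumV, hCd]
                omega
              have h2 : ∑ P ∈ compsF G (C \ {u}), ((EIn G P).ncard : ℤ) =
                  ((EIn G (C \ {u})).ncard : ℤ) := by
                rw [← Nat.cast_sum, hsumE]
              rw [h1, h2]
        have hjZ : ((compsF G (C \ {u})).card : ℤ) ≤ ((NbrIn G C u).ncard : ℤ) - 1 := by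
          omega
        have hEVZ : ((EIn G C).ncard : ℤ) =
            ((EIn G (C \ {u})).ncard : ℤ) + ((NbrIn G C u).ncard : ℤ) := by exact_mod_cast hEV
        have hmulj := mul_le_mul_of_nonneg_left hjZ (by positivity : (0:ℤ) ≤ (b : ℤ) + 1)
        have hEVmul : ((b:ℤ) + 1) * ((EIn G C).ncard : ℤ) =
            ((b:ℤ) + 1) * ((EIn G (C \ {u})).ncard : ℤ) +
            ((b:ℤ) + 1) * ((NbrIn G C u).ncard : ℤ) := by rw [hEVZ]; ring
        rw [hgC]
        linarith [hsumg, hDbound, hmulj, hEVmul]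
lemma toReachable {S : Set V} : ∀ {a b : V} (p : G.Walk a b),
    (∀ z ∈ p.support, z ∈ S) → ∀ (ha : a ∈ S) (hb : b ∈ S),
    (G.induce S).Reachable ⟨a, ha⟩ ⟨b, hb⟩ := by
  intro a b p
  induction p with
  | nil => intro _ ha hb; exact Reachable.refl _
  | @cons a a₁ c h q ih =>
    intro hsupp ha hc
    have ha₁ : a₁ ∈ S := hsupp a₁ (by simp [Walk.support_cons])
    have hadj : (G.induce S).Adj ⟨a, ha⟩ ⟨a₁, ha₁⟩ := by
      simp only [comap_adj, Function.Embedding.coe_subtype]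
      exact h
    exact (hadj.reachable).trans (ih (fun z hz => hsupp z (by simp [Walk.support_cons, hz])) ha₁ hc)

lemma ofInduceWalk {S : Set V} : ∀ (x y : S) (p : (G.induce S).Walk x y), RIn G S x y := by
  intro x y p
  induction p with
  | nil => exact RIn.refl (Subtype.coe_prop _)
  | @cons a a₁ c h q ih =>
    have hadj : G.Adj ↑a ↑a₁ := by
      simpa only [comap_adj, Function.Embedding.coe_subtype] using h
    exact (RIn.of_adj a.2 a₁.2 hadj).trans ih

lemma reachable_iff_RIn {S : Set V} {a b : V} (ha : a ∈ S) (hb : b ∈ S) :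
    (G.induce S).Reachable ⟨a, ha⟩ ⟨b, hb⟩ ↔ RIn G S a b := by
  constructor
  · rintro ⟨p⟩
    exact ofInduceWalk _ _ p
  · rintro ⟨p, hp⟩
    exact toReachable p hp ha hb

lemma supp_ncard_eq {S : Set V} {v : V} (hv : v ∈ S) :
    (((G.induce S).connectedComponentMk ⟨v, hv⟩).supp).ncard = (cc G S v).ncard := by
  have himg : Subtype.val '' ((G.induce S).connectedComponentMk ⟨v, hv⟩).supp = cc G S v := by
    ext x
    simp only [Set.mem_image, ConnectedComponent.mem_supp_iff]
    constructor
    · rintro ⟨⟨x', hx'⟩, hmk, rfl⟩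
      have hreach : (G.induce S).Reachable ⟨x', hx'⟩ ⟨v, hv⟩ :=
        (SimpleGraph.ConnectedComponent.eq).1 hmk
      exact ((reachable_iff_RIn hx' hv).1 hreach).symm
    · intro hx
      have hxS : x ∈ S := cc_subset hx
      refine ⟨⟨x, hxS⟩, ?_, rfl⟩
      exact (SimpleGraph.ConnectedComponent.eq).2 ((reachable_iff_RIn hxS hv).2 (RIn.symm hx))
  rw [← himg, Set.ncard_image_of_injective _ Subtype.val_injective]

lemma edge_ncard_eq (T : Set V) : (G.induce T).edgeSet.ncard = (EIn G T).ncard := by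
  have himg : (Sym2.map (Subtype.val : T → V)) '' (G.induce T).edgeSet = EIn G T := by
    ext e
    constructor
    · rintro ⟨e', he', rfl⟩
      induction e' using Sym2.ind with
      | _ a b =>
        rw [SimpleGraph.mem_edgeSet] at he'
        have hadj : G.Adj ↑a ↑b := by
          simpa only [comap_adj, Function.Embedding.coe_subtype] using he'
        refine ⟨by simpa [SimpleGraph.mem_edgeSet] using hadj, ?_⟩
        intro z hz
        rw [Sym2.map_pair_eq, Sym2.mem_iff] at hz
        rcases hz with rfl | rfl
        · exact a.2
        · exact b.2
    · intro he
      induction e using Sym2.ind with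
      | _ x y =>
        obtain ⟨hadj, hends⟩ := he
        rw [SimpleGraph.mem_edgeSet] at hadj
        have hx : x ∈ T := hends x (by simp)
        have hy : y ∈ T := hends y (by simp)
        refine ⟨s(⟨x, hx⟩, ⟨y, hy⟩), ?_, by rw [Sym2.map_pair_eq]⟩
        rw [SimpleGraph.mem_edgeSet]
        simp only [comap_adj, Function.Embedding.coe_subtype]
        exact hadj
  rw [← himg, Set.ncard_image_of_injective _ (Sym2.map.injective Subtype.val_injective)]
end Frag

open Frag

/-- `N(G, 𝒞_k)`: the largest size of a vertex set `S` such that every connected component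
of the induced subgraph `G[S]` has at most `k` vertices. -/
noncomputable def NC {V : Type*} [Fintype V] (G : SimpleGraph V) (k : ℕ) : ℕ :=
  sSup {m | ∃ S : Set V, m = S.ncard ∧
    ∀ v : S, (((G.induce S).connectedComponentMk v).supp).ncard ≤ k}

section NCfacts

variable {V : Type*} [Fintype V] (G : SimpleGraph V)

lemma NCset_nonempty (k : ℕ) : {m | ∃ S : Set V, m = S.ncard ∧
    ∀ v : S, (((G.induce S).connectedComponentMk v).supp).ncard ≤ k}.Nonempty := by
  refine ⟨0, ∅, by simp, fun v => (Set.notMem_empty _ v.2).elim⟩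

lemma NCset_bddAbove (k : ℕ) : BddAbove {m | ∃ S : Set V, m = S.ncard ∧
    ∀ v : S, (((G.induce S).connectedComponentMk v).supp).ncard ≤ k} := by
  refine ⟨Fintype.card V, ?_⟩
  rintro m ⟨S, rfl, -⟩
  calc S.ncard ≤ (Set.univ : Set V).ncard :=
        Set.ncard_le_ncard (Set.subset_univ S) Set.finite_univ
  _ = Fintype.card V := by rw [Set.ncard_univ, Nat.card_eq_fintype_card]

lemma NC_spec (k : ℕ) : ∃ S : Set V, NC G k = S.ncard ∧
    ∀ v : S, (((G.induce S).connectedComponentMk v).supp).ncard ≤ k :=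
  Nat.sSup_mem (NCset_nonempty G k) (NCset_bddAbove G k)

lemma le_NC (k : ℕ) (S : Set V)
    (hS : ∀ v : S, (((G.induce S).connectedComponentMk v).supp).ncard ≤ k) :
    S.ncard ≤ NC G k :=
  le_csSup (NCset_bddAbove G k) ⟨S, rfl, hS⟩

end NCfacts

theorem fragment_from_sparse {V : Type*} [Fintype V] (G : SimpleGraph V)
    (n : ℕ) (hn : n = Fintype.card V) (ε δ : ℝ) (hε : 0 < ε) (hδ : 0 < δ)
    (hδε : δ < ε / 3)
    (hG : ∀ T : Set V, (T.ncard : ℝ) ≤ δ * n →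
      ((G.induce T).edgeSet.ncard : ℝ) ≤ (1 + ε / 3) * T.ncard) :
    (NC G ⌊δ * n⌋₊ : ℝ) ≤ NC G ⌈(3 : ℝ) / ε⌉₊ + ε * n := by
  classical
  set a := ⌊δ * n⌋₊ with ha
  set b := ⌈(3 : ℝ) / ε⌉₊ with hb
  obtain ⟨S, hScard, hScomp⟩ := NC_spec G a
  -- components of S, via our machinery
  have hcomp : ∀ v ∈ S, (cc G S v).ncard ≤ a := by
    intro v hv
    have := hScomp ⟨v, hv⟩
    rwa [supp_ncard_eq hv] at this
  -- apply the main lemma to each component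
  have hrec : ∀ C ∈ compsF G S, ∃ DC, DC ⊆ C ∧
      (∀ x ∈ C \ DC, (cc G (C \ DC) x).ncard ≤ b) ∧
      ((b : ℤ) + 1) * DC.ncard ≤ gBound G b C := by
    intro C hC
    obtain ⟨DC, h1, h2, h3⟩ := ML b C.ncard C rfl (conn_of_compsF hC) (compsF_nonempty hC)
    exact ⟨DC, h1, h2, h3⟩
  choose! f hfsub hfcomp hfbound using hrec
  set D : Set V := ⋃ C ∈ compsF G S, f C with hD
  have hDS : D ⊆ S := by
    apply Set.iUnion₂_subset
    intro C hC
    exact (hfsub C hC).trans (compsF_subset hC)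
  -- the surviving set S' has small components
  have hS'comp : ∀ v : ↥(S \ D), (((G.induce (S \ D)).connectedComponentMk v).supp).ncard ≤ b := by
    rintro ⟨x, hx⟩
    rw [supp_ncard_eq hx]
    have hxS : x ∈ S := hx.1
    have hPF : cc G S x ∈ compsF G S := cc_mem_compsF hxS
    have hxP : x ∈ cc G S x \ f (cc G S x) := by
      refine ⟨mem_cc_self hxS, fun hxf => hx.2 (Set.mem_biUnion hPF hxf)⟩
    have hsub2 : cc G (S \ D) x ⊆ cc G (cc G S x \ f (cc G S x)) x := by
      intro y hy
      obtain ⟨wk, hwk⟩ := hy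
      have hsupS : ∀ z ∈ wk.support, z ∈ S := fun z hz => (hwk z hz).1
      refine ⟨wk, fun z hz => ⟨support_subset_cc wk hsupS z hz, fun hzf => ?_⟩⟩
      exact (hwk z hz).2 (Set.mem_biUnion hPF hzf)
    exact le_trans (Set.ncard_le_ncard hsub2 (Set.toFinite _)) (hfcomp _ hPF x hxP)
  have hNCb : (S \ D).ncard ≤ NC G b := le_NC G b _ hS'comp
  -- cardinality bookkeeping
  have hsplit : S.ncard ≤ (S \ D).ncard + D.ncard := by
    calc S.ncard ≤ ((S \ D) ∪ D).ncard :=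
          Set.ncard_le_ncard (fun x hx => by
            by_cases hxD : x ∈ D
            · exact Set.mem_union_right _ hxD
            · exact Set.mem_union_left _ ⟨hx, hxD⟩) (Set.toFinite _)
    _ ≤ (S \ D).ncard + D.ncard := Set.ncard_union_le _ _
  have hDsum : D.ncard ≤ ∑ C ∈ compsF G S, (f C).ncard := ncard_biUnion_le _ _
  -- the key real bound per component
  have hbR : (3 : ℝ) / ε ≤ (b : ℝ) := Nat.le_ceil _
  have hper : ∀ C ∈ compsF G S, ((f C).ncard : ℝ) ≤ ε * C.ncard := by
    intro C hC
    have hboundZ := hfbound C hC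
    by_cases hsmall : C.ncard ≤ b
    · have h0 : gBound G b C = 0 := by rw [gBound, if_pos hsmall]
      rw [h0] at hboundZ
      have : (f C).ncard = 0 := by
        by_contra hne
        have h1 : (1 : ℤ) ≤ ((f C).ncard : ℤ) := by omega
        nlinarith [(by positivity : (0:ℤ) ≤ (b : ℤ))]
      rw [this]
      simp only [Nat.cast_zero]
      positivity
    · push_neg at hsmall
      have hgC : gBound G b C = (C.ncard : ℤ) +
          ((b : ℤ) + 1) * ((EIn G C).ncard + 1 - C.ncard) := by
        rw [gBound, if_neg (by omega)]
      rw [hgC] at hboundZ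
      -- move to ℝ
      have hbR' : ((b : ℝ) + 1) * ((f C).ncard : ℝ) ≤ (C.ncard : ℝ) +
          ((b : ℝ) + 1) * (((EIn G C).ncard : ℝ) + 1 - C.ncard) := by
        exact_mod_cast hboundZ
      -- sparsity applies since |C| ≤ a ≤ δn
      obtain ⟨v₀, hv₀, hCeq⟩ := Frag.mem_compsF.1 hC
      have hCa : C.ncard ≤ a := by rw [← hCeq]; exact hcomp v₀ hv₀
      have hCδ : (C.ncard : ℝ) ≤ δ * n := by
        calc (C.ncard : ℝ) ≤ (a : ℝ) := by exact_mod_cast hCa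
        _ ≤ δ * n := Nat.floor_le (by positivity)
      have hsparse : ((EIn G C).ncard : ℝ) ≤ (1 + ε / 3) * C.ncard := by
        rw [← edge_ncard_eq]
        exact hG C hCδ
      -- arithmetic
      set t := (C.ncard : ℝ) with ht
      set B := ((b : ℝ) + 1) with hB
      have hBpos : 0 < B := by positivity
      have hεB : 1 ≤ B * (ε / 3) := by
        have h1 : (3 : ℝ) / ε ≤ B := by rw [hB]; linarith
        calc (1 : ℝ) = (3 / ε) * (ε / 3) := by field_simp
        _ ≤ B * (ε / 3) := by
            apply mul_le_mul_of_nonneg_right h1 (by positivity)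
    
      have htb : B ≤ t := by
        rw [hB, ht]
        exact_mod_cast hsmall
      have htpos : (0:ℝ) < t := lt_of_lt_of_le hBpos htb
      -- B * fc ≤ t + B*(e+1-t) ≤ t + B*(εt/3 + 1) ≤ 3 * (ε/3) * B * t = ε B t
      have h2 : B * ((f C).ncard : ℝ) ≤ t + B * ((ε/3) * t + 1) := by
        have : ((EIn G C).ncard : ℝ) + 1 - t ≤ (ε/3) * t + 1 := by
          rw [ht]; linarith [hsparse]
        nlinarith [hBpos.le]
      have h3 : t ≤ B * (ε/3) * t := by nlinarith
      have h4 : B ≤ B * (ε/3) * t := by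
        calc B ≤ t := htb
        _ ≤ B * (ε/3) * t := h3
      have h5 : B * ((f C).ncard : ℝ) ≤ 3 * (B * (ε/3) * t) := by
        have hBε : B * ((ε/3) * t + 1) = B * (ε/3) * t + B := by ring
        linarith
      have h6 : B * ((f C).ncard : ℝ) ≤ B * (ε * t) := by
        calc B * ((f C).ncard : ℝ) ≤ 3 * (B * (ε/3) * t) := h5
        _ = B * (ε * t) := by ring
      exact le_of_mul_le_mul_left h6 hBpos
  -- sum up
  have hsumR : ((D.ncard : ℝ)) ≤ ε * S.ncard := by
    calc (D.ncard : ℝ) ≤ ((∑ C ∈ compsF G S, (f C).ncard : ℕ) : ℝ) := by exact_mod_cast hDsum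
    _ = ∑ C ∈ compsF G S, ((f C).ncard : ℝ) := by push_cast; ring
    _ ≤ ∑ C ∈ compsF G S, ε * (C.ncard : ℝ) := Finset.sum_le_sum hper
    _ = ε * ∑ C ∈ compsF G S, (C.ncard : ℝ) := by rw [Finset.mul_sum]
    _ = ε * S.ncard := by
        congr 1
        rw [← Nat.cast_sum, sum_ncard_compsF]
  have hSn : (S.ncard : ℝ) ≤ n := by
    have h1 : S.ncard ≤ Fintype.card V := by
      calc S.ncard ≤ (Set.univ : Set V).ncard :=
            Set.ncard_le_ncard (Set.subset_univ S) Set.finite_univ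
      _ = Fintype.card V := by rw [Set.ncard_univ, Nat.card_eq_fintype_card]
    rw [hn]
    exact_mod_cast h1
  have hfin : (S.ncard : ℝ) ≤ (NC G b : ℝ) + ε * n := by
    have h1 : (S.ncard : ℝ) ≤ ((S \ D).ncard : ℝ) + (D.ncard : ℝ) := by exact_mod_cast hsplit
    have h2 : ((S \ D).ncard : ℝ) ≤ (NC G b : ℝ) := by exact_mod_cast hNCb
    have h3 : ε * (S.ncard : ℝ) ≤ ε * n := mul_le_mul_of_nonneg_left hSn hε.le
    linarith
  rw [hScard]
  exact hfin
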